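/- For all i, j ∈ I one has n_i^{−1} h_j n_i = h_j − (α_i, α_j^∨) h_i; and for all i ∈ I and α ∈ Φ one has n_i 𝔤_α n_i^{−1} = 𝔤_{s_i(α)}, where 𝔤_α := {x ∈ 𝔤 : [h_j, x] = (α, α_j^∨) x for all j ∈ I}. -/

import Mathlib

noncomputable section

open scoped BigOperators

attribute [local instance 100] LieRing.ofAssociativeRing

/-- `pr B x y` is the pairing `(x, y^∨) = 2(x,y)/(y,y)`. -/
def pr {E : Type} [AddCommGroup E] [Module ℚ E] (B : E →ₗ[ℚ] E →ₗ[ℚ] ℚ) (x y : E) : ℚ :=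
  2 * B x y / B y y

/-- A reduced irreducible crystallographic root system `Φ` in a finite-dimensional ℚ-vector
space `E` equipped with a positive definite symmetric bilinear form, together with a system of
simple roots `α i` (`i ∈ I`). -/
structure RootSystemCtx (E I : Type) [AddCommGroup E] [Module ℚ E] [Fintype I] : Type where
  B : E →ₗ[ℚ] E →ₗ[ℚ] ℚ
  Bsymm : ∀ x y, B x y = B y x
  Bpos : ∀ x, x ≠ 0 → 0 < B x x
  findim : FiniteDimensional ℚ E
  Φ : Set E
  Φfin : Φ.Finite
  zero_nmem : (0 : E) ∉ Φ
  reduced : ∀ a ∈ Φ, ∀ b ∈ Φ, b ≠ a → b ≠ -a → LinearIndependent ℚ ![a, b]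
  crystal : ∀ a ∈ Φ, ∀ b ∈ Φ, ∃ n : ℤ, pr B b a = (n : ℚ)
  reflect_mem : ∀ a ∈ Φ, ∀ b ∈ Φ, b - pr B b a • a ∈ Φ
  α : I → E
  α_mem : ∀ i, α i ∈ Φ
  α_indep : LinearIndependent ℚ α
  α_span : Submodule.span ℚ (Set.range α) = ⊤
  pos_neg : ∀ b ∈ Φ, (∃ cf : I → ℤ, (∀ i, 0 ≤ cf i) ∧ b = ∑ i, (cf i : ℚ) • α i) ∨
      (∃ cf : I → ℤ, (∀ i, cf i ≤ 0) ∧ b = ∑ i, (cf i : ℚ) • α i)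
  irred : ¬ ∃ Φ₁ Φ₂ : Set E, Φ₁.Nonempty ∧ Φ₂.Nonempty ∧ Φ₁ ∪ Φ₂ = Φ ∧
      ∀ a ∈ Φ₁, ∀ b ∈ Φ₂, B a b = 0

namespace RootSystemCtx

variable {E I : Type} [AddCommGroup E] [Module ℚ E] [Fintype I] (c : RootSystemCtx E I)

/-- The linear functional `(·, a^∨)`. -/
def coform (a : E) : Module.Dual ℚ E := (2 * (c.B a a)⁻¹) • (c.B.flip a)

lemma coform_apply (a x : E) : c.coform a x = pr c.B x a := by
  simp only [coform, LinearMap.smul_apply, LinearMap.flip_apply, smul_eq_mul, pr,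
    div_eq_mul_inv]
  ring

lemma coform_self {a : E} (ha : a ∈ c.Φ) : c.coform a a = 2 := by
  have h0 : a ≠ 0 := fun h => c.zero_nmem (h ▸ ha)
  have hB : c.B a a ≠ 0 := ne_of_gt (c.Bpos a h0)
  rw [coform_apply, pr]
  field_simp

/-- The simple reflection `s i : v ↦ v - (v, αᵢ^∨) αᵢ`. -/
def s (i : I) : E ≃ₗ[ℚ] E := Module.reflection (c.coform_self (c.α_mem i))

lemma s_apply (i : I) (v : E) : c.s i v = v - pr c.B v (c.α i) • c.α i := by
  rw [s, Module.reflection_apply, coform_apply]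

/-- The Weyl group, as a subgroup of the group of linear automorphisms of `E`. -/
def Weyl : Subgroup (E ≃ₗ[ℚ] E) := Subgroup.closure (Set.range c.s)

/-- `lam` is a minuscule (dominant) weight: a nonzero dominant weight (integral pairing
with every simple coroot) with `(lam, a^∨) ∈ {0, ±1}` for every root `a`. -/
def IsMinuscule (lam : E) : Prop :=
  lam ≠ 0 ∧ (∀ i, ∃ n : ℤ, pr c.B lam (c.α i) = (n : ℚ)) ∧ (∀ i, 0 ≤ pr c.B lam (c.α i)) ∧
    ∀ a ∈ c.Φ, pr c.B lam a = 0 ∨ pr c.B lam a = 1 ∨ pr c.B lam a = -1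

/-- `b` is a positive root. -/
def IsPos (b : E) : Prop :=
  b ∈ c.Φ ∧ ∃ cf : I → ℚ, (∀ i, 0 ≤ cf i) ∧ b = ∑ i, cf i • c.α i

end RootSystemCtx

/-- A nonempty union `Ψ` of Weyl group orbits of minuscule weights. -/
structure PsiData {E I : Type} [AddCommGroup E] [Module ℚ E] [Fintype I]
    (c : RootSystemCtx E I) : Type where
  Ψ : Set E
  nonempty : Ψ.Nonempty
  finite : Ψ.Finite
  orbit : ∀ μ ∈ Ψ, ∃ lam, c.IsMinuscule lam ∧ ∃ w ∈ c.Weyl, w lam = μ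
  stab : ∀ μ ∈ Ψ, ∀ w ∈ c.Weyl, w μ ∈ Ψ

/-- `nOp e f i t tinv` is the operator `(1 + t eᵢ)(1 - t⁻¹ fᵢ)(1 + t eᵢ)`, where `tinv`
is the inverse of `t`. -/
def nOp {I K M' : Type} [CommRing K] [AddCommGroup M'] [Module K M']
    (e f : I → Module.End K M') (i : I) (t tinv : K) : Module.End K M' :=
  (1 + t • e i) * (1 - tinv • f i) * (1 + t • e i)

/-- `hOp e f i t` is the operator `hᵢ(t) = nᵢ(t) nᵢ(-1)` for a unit `t`. -/
def hOp {I K M' : Type} [CommRing K] [AddCommGroup M'] [Module K M']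
    (e f : I → Module.End K M') (i : I) (t : Kˣ) : Module.End K M' :=
  nOp e f i (t : K) ((t⁻¹ : Kˣ) : K) * nOp e f i ((-1 : Kˣ) : K) (((-1 : Kˣ)⁻¹ : Kˣ) : K)

/-- Conjugation `n_{i₁} ⋯ n_{i_k} x n_{i_k}⁻¹ ⋯ n_{i₁}⁻¹` for a list `l = [i₁, …, i_k]`. -/
def conjOp {I M' : Type} [AddCommGroup M'] [Module ℂ M'] (nu : I → (Module.End ℂ M')ˣ)
    (x : Module.End ℂ M') (l : List I) : Module.End ℂ M' :=
  ↑((l.map nu).prod) * x * ↑(((l.map nu).prod)⁻¹)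

/-- The Lie subalgebra of `𝔤𝔩(M)` generated by the `eᵢ` and `fᵢ`. -/
def genLie {I M' : Type} [AddCommGroup M'] [Module ℂ M'] (e f : I → Module.End ℂ M') :
    LieSubalgebra ℂ (Module.End ℂ M') :=
  LieSubalgebra.lieSpan ℂ (Module.End ℂ M') (Set.range e ∪ Set.range f)

/-- The root space `𝔤_a = {x ∈ 𝔤 ∣ [hⱼ, x] = (a, αⱼ^∨) x for all j}`, as a set. -/
def rootSet {E I M' : Type} [AddCommGroup E] [Module ℚ E] [Fintype I]
    [AddCommGroup M'] [Module ℂ M'] (c : RootSystemCtx E I)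
    (e f h : I → Module.End ℂ M') (a : E) : Set (Module.End ℂ M') :=
  {x | x ∈ genLie e f ∧ ∀ j, ⁅h j, x⁆ = ((pr c.B a (c.α j) : ℚ) : ℂ) • x}

/-- The root space `𝔤_a`, as a submodule of `𝔤𝔩(M)`. -/
def rootSp {E I M' : Type} [AddCommGroup E] [Module ℚ E] [Fintype I]
    [AddCommGroup M'] [Module ℂ M'] (c : RootSystemCtx E I)
    (e f h : I → Module.End ℂ M') (a : E) : Submodule ℂ (Module.End ℂ M') :=
  (genLie e f).toSubmodule ⊓ ⨅ j : I,
    Module.End.eigenspace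
      (LinearMap.mulLeft ℂ (h j) - LinearMap.mulRight ℂ (h j) : Module.End ℂ (Module.End ℂ M'))
      ((pr c.B a (c.α j) : ℚ) : ℂ)

/-- The diagonal subgroup `H` generated by all `hᵢ(t)`, `t ∈ Kˣ`. -/
def Hgroup {I K M' : Type} [CommRing K] [AddCommGroup M'] [Module K M']
    (e f : I → Module.End K M') : Subgroup (Module.End K M')ˣ :=
  Subgroup.closure {g | ∃ (i : I) (t : Kˣ), (g : Module.End K M') = hOp e f i t}

/-- The monomial subgroup `N` generated by all `nᵢ(t)`, `t ∈ Kˣ`. -/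
def Ngroup {I K M' : Type} [CommRing K] [AddCommGroup M'] [Module K M']
    (e f : I → Module.End K M') : Subgroup (Module.End K M')ˣ :=
  Subgroup.closure {g | ∃ (i : I) (t : Kˣ),
    (g : Module.End K M') = nOp e f i (t : K) ((t⁻¹ : Kˣ) : K)}

/-- The subgroup `U⁺` generated by all `x_γ(t) = 1 + t ē_γ` with `γ ∈ Φ⁺`. -/
def Uplus {E I K M' : Type} [AddCommGroup E] [Module ℚ E] [Fintype I]
    [CommRing K] [AddCommGroup M'] [Module K M'] (c : RootSystemCtx E I)
    (eb : E → Module.End K M') : Subgroup (Module.End K M')ˣ :=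
  Subgroup.closure {g | ∃ γ, c.IsPos γ ∧ ∃ t : K, (g : Module.End K M') = 1 + t • eb γ}

/-- The subgroup `U⁻` generated by all `x_γ(t) = 1 + t ē_γ` with `γ ∈ Φ⁻`. -/
def Uminus {E I K M' : Type} [AddCommGroup E] [Module ℚ E] [Fintype I]
    [CommRing K] [AddCommGroup M'] [Module K M'] (c : RootSystemCtx E I)
    (eb : E → Module.End K M') : Subgroup (Module.End K M')ˣ :=
  Subgroup.closure {g | ∃ γ, c.IsPos (-γ) ∧ ∃ t : K, (g : Module.End K M') = 1 + t • eb γ}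

/-- The subgroup `Uᵢ⁺` generated by all `x_γ(t)` with `γ ∈ Φ⁺`, `γ ≠ αᵢ`. -/
def UplusI {E I K M' : Type} [AddCommGroup E] [Module ℚ E] [Fintype I]
    [CommRing K] [AddCommGroup M'] [Module K M'] (c : RootSystemCtx E I)
    (eb : E → Module.End K M') (i : I) : Subgroup (Module.End K M')ˣ :=
  Subgroup.closure {g | ∃ γ, c.IsPos γ ∧ γ ≠ c.α i ∧ ∃ t : K, (g : Module.End K M') = 1 + t • eb γ}

section Aux

lemma pr_add_left {E : Type} [AddCommGroup E] [Module ℚ E] (B : E →ₗ[ℚ] E →ₗ[ℚ] ℚ)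
    (x y w : E) : pr B (x + y) w = pr B x w + pr B y w := by
  simp only [pr, map_add, LinearMap.add_apply]
  rw [mul_add, add_div]

lemma pr_smul_left {E : Type} [AddCommGroup E] [Module ℚ E] (B : E →ₗ[ℚ] E →ₗ[ℚ] ℚ)
    (t : ℚ) (x w : E) : pr B (t • x) w = t * pr B x w := by
  simp only [pr, map_smul, LinearMap.smul_apply, smul_eq_mul]
  rw [mul_left_comm, mul_div_assoc]

lemma pr_sub_left {E : Type} [AddCommGroup E] [Module ℚ E] (B : E →ₗ[ℚ] E →ₗ[ℚ] ℚ)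
    (x y w : E) : pr B (x - y) w = pr B x w - pr B y w := by
  simp only [pr, map_sub, LinearMap.sub_apply]
  rw [mul_sub, sub_div]

namespace RootSystemCtx

variable {E I : Type} [AddCommGroup E] [Module ℚ E] [Fintype I] (c : RootSystemCtx E I)

lemma pr_self {a : E} (ha : a ∈ c.Φ) : pr c.B a a = 2 := by
  rw [← c.coform_apply]; exact c.coform_self ha

lemma α_ne_zero (i : I) : c.α i ≠ 0 := fun h0 => c.zero_nmem (h0 ▸ c.α_mem i)

lemma B_α_ne_zero (i : I) : c.B (c.α i) (c.α i) ≠ 0 :=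
  ne_of_gt (c.Bpos _ (c.α_ne_zero i))

lemma pr_s (i j : I) (b : E) :
    pr c.B (c.s i b) (c.α j)
      = pr c.B b (c.α j) - pr c.B b (c.α i) * pr c.B (c.α i) (c.α j) := by
  rw [c.s_apply, pr_sub_left, pr_smul_left]

lemma s_mem_weyl (i : I) : c.s i ∈ c.Weyl :=
  Subgroup.subset_closure ⟨i, rfl⟩

lemma weyl_B : ∀ w ∈ c.Weyl, (∀ x y, c.B (w x) (w y) = c.B x y) ∧ (⇑w '' c.Φ = c.Φ) := by
  intro w hw
  induction hw using Subgroup.closure_induction with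
  | mem w hw =>
    obtain ⟨i, rfl⟩ := hw
    constructor
    · intro x y
      have hd := c.B_α_ne_zero i
      rw [c.s_apply, c.s_apply]
      simp only [pr, map_sub, map_smul, LinearMap.sub_apply, LinearMap.smul_apply,
        smul_eq_mul]
      rw [c.Bsymm (c.α i) y, c.Bsymm x (c.α i)]
      field_simp
      ring
    · have hsub : ⇑(c.s i) '' c.Φ ⊆ c.Φ := by
        rintro _ ⟨b, hb, rfl⟩
        rw [c.s_apply]
        exact c.reflect_mem _ (c.α_mem i) b hb
      refine Set.eq_of_subset_of_ncard_le hsub ?_ c.Φfin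
      rw [Set.ncard_image_of_injective _ (c.s i).injective]
  | one =>
    constructor
    · intro x y; rfl
    · simp
  | mul u v hu hv hiu hiv =>
    constructor
    · intro x y
      have : ∀ t : E, (u * v) t = u (v t) := fun t => rfl
      rw [this, this, hiu.1, hiv.1]
    · have : ⇑(u * v) = ⇑u ∘ ⇑v := rfl
      rw [this, Set.image_comp, hiv.2, hiu.2]
  | inv u hu hiu =>
    have hco : ∀ t : E, u (u⁻¹ t) = t := fun t => u.apply_symm_apply t
    have hco' : ∀ t : E, u⁻¹ (u t) = t := fun t => u.symm_apply_apply t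
    constructor
    · intro x y
      rw [← hiu.1 (u⁻¹ x) (u⁻¹ y), hco, hco]
    · conv_lhs => rw [← hiu.2]
      ext t
      constructor
      · rintro ⟨_, ⟨b, hb, rfl⟩, rfl⟩
        rwa [hco']
      · intro ht
        exact ⟨u t, ⟨t, ht, rfl⟩, hco' t⟩

lemma mins (P : PsiData c) : ∀ μ ∈ P.Ψ, ∀ a ∈ c.Φ,
    pr c.B μ a = 0 ∨ pr c.B μ a = 1 ∨ pr c.B μ a = -1 := by
  intro μ hμ a ha
  obtain ⟨lam, hlam, w, hw, rfl⟩ := P.orbit μ hμ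
  have hinv : w⁻¹ ∈ c.Weyl := c.Weyl.inv_mem hw
  have hb : w⁻¹ a ∈ c.Φ := by
    rw [← (c.weyl_B w⁻¹ hinv).2]
    exact Set.mem_image_of_mem _ ha
  have h1 := (c.weyl_B w hw).1 lam (w⁻¹ a)
  have h2 := (c.weyl_B w hw).1 (w⁻¹ a) (w⁻¹ a)
  have hco : w (w⁻¹ a) = a := w.apply_symm_apply a
  rw [hco] at h1 h2
  have key : pr c.B (w lam) a = pr c.B lam (w⁻¹ a) := by
    rw [pr, pr, h1, h2]
  rw [key]
  exact hlam.2.2.2 _ hb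

end RootSystemCtx

lemma conj_one {I M' : Type} [AddCommGroup M'] [Module ℂ M'] (e f : I → Module.End ℂ M')
    (a x : Module.End ℂ M') (ha2 : a * a = 0) (haL : a ∈ genLie e f)
    (hx : x ∈ genLie e f) : (1 + a) * x * (1 - a) ∈ genLie e f := by
  have hb : ⁅a, ⁅a, x⁆⁆ = a * a * x - a * x * a - (a * x * a - x * (a * a)) := by
    simp only [Ring.lie_def]
    noncomm_ring
  rw [ha2, zero_mul, mul_zero, zero_sub, sub_zero] at hb
  have hb' : ⁅a, ⁅a, x⁆⁆ = (-2 : ℂ) • (a * x * a) := by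
    rw [hb]; rw [neg_smul]; rw [show ((2:ℂ) • (a*x*a)) = a*x*a + a*x*a from two_smul ℂ _]
    abel
  have hmain : (1 + a) * x * (1 - a) = x + ⁅a, x⁆ + (1/2 : ℂ) • ⁅a, ⁅a, x⁆⁆ := by
    rw [hb', smul_smul]
    norm_num
    rw [Ring.lie_def]
    noncomm_ring
  rw [hmain]
  exact (genLie e f).add_mem ((genLie e f).add_mem hx ((genLie e f).lie_mem haL hx))
    ((genLie e f).smul_mem _ ((genLie e f).lie_mem haL ((genLie e f).lie_mem haL hx)))

end Aux

/-- Lemma 3.3: nᵢ⁻¹ hⱼ nᵢ = hⱼ - (αᵢ, αⱼ^∨) hᵢ and nᵢ 𝔤_a nᵢ⁻¹ = 𝔤_{sᵢ(a)}. -/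
theorem stmt_9 {E I : Type} [AddCommGroup E] [Module ℚ E] [Fintype I]
    (c : RootSystemCtx E I) (P : PsiData c)
    (M : Type) [AddCommGroup M] [Module ℂ M] (z : Module.Basis P.Ψ ℂ M)
    (e f : I → Module.End ℂ M)
    (he1 : ∀ (i : I) (μ : P.Ψ) (hm : (μ : E) + c.α i ∈ P.Ψ),
      pr c.B (μ : E) (c.α i) = -1 → e i (z μ) = z ⟨(μ : E) + c.α i, hm⟩)
    (he0 : ∀ (i : I) (μ : P.Ψ), pr c.B (μ : E) (c.α i) ≠ -1 → e i (z μ) = 0)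
    (hf1 : ∀ (i : I) (μ : P.Ψ) (hm : (μ : E) - c.α i ∈ P.Ψ),
      pr c.B (μ : E) (c.α i) = 1 → f i (z μ) = z ⟨(μ : E) - c.α i, hm⟩)
    (hf0 : ∀ (i : I) (μ : P.Ψ), pr c.B (μ : E) (c.α i) ≠ 1 → f i (z μ) = 0)
    (h : I → Module.End ℂ M)
    (hh : ∀ (i : I) (μ : P.Ψ), h i (z μ) = ((pr c.B (μ : E) (c.α i) : ℚ) : ℂ) • z μ)
    (i : I) (ninv : Module.End ℂ M)
    (hn1 : ninv * nOp e f i 1 1 = 1) (hn2 : nOp e f i 1 1 * ninv = 1) :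
    (∀ j : I, ninv * h j * nOp e f i 1 1
      = h j - ((pr c.B (c.α i) (c.α j) : ℚ) : ℂ) • h i) ∧
    (∀ a ∈ c.Φ,
      (fun x => nOp e f i 1 1 * x * ninv) '' rootSet c e f h a
        = rootSet c e f h (c.s i a)) := by
    classical
  -- basic pairing facts
  have hprii : pr c.B (c.α i) (c.α i) = 2 := c.pr_self (c.α_mem i)
  have hmins := c.mins P
  have hsmem : ∀ μ : P.Ψ, c.s i (μ : E) ∈ P.Ψ :=
    fun μ => P.stab (μ : E) μ.2 (c.s i) (c.s_mem_weyl i)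
  have hsub : ∀ μ : P.Ψ, pr c.B (μ : E) (c.α i) = 1 → (μ : E) - c.α i ∈ P.Ψ := by
    intro μ h1
    have := hsmem μ
    rwa [c.s_apply, h1, one_smul] at this
  have haddm : ∀ μ : P.Ψ, pr c.B (μ : E) (c.α i) = -1 → (μ : E) + c.α i ∈ P.Ψ := by
    intro μ h1
    have := hsmem μ
    rwa [c.s_apply, h1, neg_one_smul, sub_neg_eq_add] at this
  have hNsimp : nOp e f i 1 1 = (1 + e i) * (1 - f i) * (1 + e i) := by
    simp [nOp]
  -- action of N on the basis
  have hN0 : ∀ μ : P.Ψ, pr c.B (μ : E) (c.α i) = 0 →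
      nOp e f i 1 1 (z μ) = z μ := by
    intro μ h0
    have hez : e i (z μ) = 0 := he0 i μ (by rw [h0]; norm_num)
    have hfz : f i (z μ) = 0 := hf0 i μ (by rw [h0]; norm_num)
    rw [hNsimp]
    simp [Module.End.mul_apply, LinearMap.add_apply, LinearMap.sub_apply, hez, hfz]
  have hN1 : ∀ (μ : P.Ψ) (hm : (μ : E) - c.α i ∈ P.Ψ), pr c.B (μ : E) (c.α i) = 1 →
      nOp e f i 1 1 (z μ) = -(z ⟨(μ : E) - c.α i, hm⟩) := by
    intro μ hm h1
    set ν : P.Ψ := ⟨(μ : E) - c.α i, hm⟩ with hν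
    have hprν : pr c.B (ν : E) (c.α i) = -1 := by
      show pr c.B ((μ : E) - c.α i) (c.α i) = -1
      rw [pr_sub_left, h1, hprii]; norm_num
    have heμ : e i (z μ) = 0 := he0 i μ (by rw [h1]; norm_num)
    have hfμ : f i (z μ) = z ν := hf1 i μ hm h1
    have hm' : (ν : E) + c.α i ∈ P.Ψ := by
      show (μ : E) - c.α i + c.α i ∈ P.Ψ
      rw [sub_add_cancel]; exact μ.2
    have heν : e i (z ν) = z μ := by
      rw [he1 i ν hm' hprν]
      exact congrArg z (Subtype.ext (sub_add_cancel (μ : E) (c.α i)))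
    have hfν : f i (z ν) = 0 := hf0 i ν (by rw [hprν]; norm_num)
    rw [hNsimp]
    simp only [Module.End.mul_apply, LinearMap.add_apply, LinearMap.sub_apply,
      Module.End.one_apply, heμ, hfμ, add_zero, map_sub, heν, hfν, sub_zero]
    abel
  have hNm1 : ∀ (μ : P.Ψ) (hm : (μ : E) + c.α i ∈ P.Ψ), pr c.B (μ : E) (c.α i) = -1 →
      nOp e f i 1 1 (z μ) = z ⟨(μ : E) + c.α i, hm⟩ := by
    intro μ hm h1
    set ν : P.Ψ := ⟨(μ : E) + c.α i, hm⟩ with hν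
    have hprν : pr c.B (ν : E) (c.α i) = 1 := by
      show pr c.B ((μ : E) + c.α i) (c.α i) = 1
      rw [pr_add_left, h1, hprii]; norm_num
    have heμ : e i (z μ) = z ν := he1 i μ hm h1
    have hfμ : f i (z μ) = 0 := hf0 i μ (by rw [h1]; norm_num)
    have hm' : (ν : E) - c.α i ∈ P.Ψ := by
      show (μ : E) + c.α i - c.α i ∈ P.Ψ
      rw [add_sub_cancel_right]; exact μ.2
    have hfν : f i (z ν) = z μ := by
      rw [hf1 i ν hm' hprν]
      exact congrArg z (Subtype.ext (add_sub_cancel_right (μ : E) (c.α i)))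
    have heν : e i (z ν) = 0 := he0 i ν (by rw [hprν]; norm_num)
    have s1 : (1 + e i) (z μ) = z μ + z ν := by
      rw [LinearMap.add_apply, Module.End.one_apply, heμ]
    have s2 : (1 - f i) (z μ + z ν) = z ν := by
      rw [LinearMap.sub_apply, Module.End.one_apply, map_add, hfμ, hfν, zero_add]
      abel
    have s3 : (1 + e i) (z ν) = z ν := by
      rw [LinearMap.add_apply, Module.End.one_apply, heν, add_zero]
    rw [hNsimp]
    calc ((1 + e i) * (1 - f i) * (1 + e i)) (z μ)
        = (1 + e i) ((1 - f i) ((1 + e i) (z μ))) := rfl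
      _ = z ν := by rw [s1, s2, s3]
  -- squares vanish
  have hee : e i * e i = 0 := by
    refine z.ext fun μ => ?_
    simp only [Module.End.mul_apply, LinearMap.zero_apply]
    rcases eq_or_ne (pr c.B (μ : E) (c.α i)) (-1) with hm | hm
    · have hmm := haddm μ hm
      rw [he1 i μ hmm hm]
      apply he0
      show pr c.B ((μ : E) + c.α i) (c.α i) ≠ -1
      rw [pr_add_left, hm, hprii]; norm_num
    · rw [he0 i μ hm, map_zero]
  have hff : f i * f i = 0 := by
    refine z.ext fun μ => ?_
    simp only [Module.End.mul_apply, LinearMap.zero_apply]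
    rcases eq_or_ne (pr c.B (μ : E) (c.α i)) 1 with hm | hm
    · have hmm := hsub μ hm
      rw [hf1 i μ hmm hm]
      apply hf0
      show pr c.B ((μ : E) - c.α i) (c.α i) ≠ 1
      rw [pr_sub_left, hm, hprii]; norm_num
    · rw [hf0 i μ hm, map_zero]
  -- commutation relation  h j * N = N * (h j - c_ij • h i)
  have hN : ∀ j, h j * nOp e f i 1 1
      = nOp e f i 1 1 * (h j - ((pr c.B (c.α i) (c.α j) : ℚ) : ℂ) • h i) := by
    intro j
    refine z.ext fun μ => ?_
    have hrhs : (h j - ((pr c.B (c.α i) (c.α j) : ℚ) : ℂ) • h i) (z μ)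
        = (((pr c.B (μ : E) (c.α j) - pr c.B (μ : E) (c.α i)
            * pr c.B (c.α i) (c.α j) : ℚ) : ℂ)) • z μ := by
      simp only [LinearMap.sub_apply, LinearMap.smul_apply, hh, smul_smul]
      rw [← sub_smul]
      congr 1
      push_cast
      ring
    rcases hmins (μ : E) μ.2 (c.α i) (c.α_mem i) with h0 | h1 | hm1
    · simp only [Module.End.mul_apply, hrhs, map_smul, hN0 μ h0, hh]
      congr 1
      rw [h0]; push_cast; ring
    · have hm := hsub μ h1
      simp only [Module.End.mul_apply, hrhs, map_smul, hN1 μ hm h1, hh, map_neg,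
        smul_neg]
      rw [show pr c.B ((⟨(μ : E) - c.α i, hm⟩ : P.Ψ) : E) (c.α j)
          = pr c.B (μ : E) (c.α j) - pr c.B (c.α i) (c.α j) by
        rw [show ((⟨(μ : E) - c.α i, hm⟩ : P.Ψ) : E) = (μ : E) - c.α i from rfl,
          pr_sub_left]]
      congr 2
      rw [h1]; push_cast; ring
    · have hm := haddm μ hm1
      simp only [Module.End.mul_apply, hrhs, map_smul, hNm1 μ hm hm1, hh]
      rw [show pr c.B ((⟨(μ : E) + c.α i, hm⟩ : P.Ψ) : E) (c.α j)
          = pr c.B (μ : E) (c.α j) + pr c.B (c.α i) (c.α j) by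
        rw [show ((⟨(μ : E) + c.α i, hm⟩ : P.Ψ) : E) = (μ : E) + c.α i from rfl,
          pr_add_left]]
      congr 1
      rw [hm1]; push_cast; ring
  -- part 1
  have part1 : ∀ j : I, ninv * h j * nOp e f i 1 1
      = h j - ((pr c.B (c.α i) (c.α j) : ℚ) : ℂ) • h i := by
    intro j
    calc ninv * h j * nOp e f i 1 1 = ninv * (h j * nOp e f i 1 1) := by
          rw [mul_assoc]
      _ = ninv * (nOp e f i 1 1 * (h j - ((pr c.B (c.α i) (c.α j) : ℚ) : ℂ) • h i)) := by
          rw [hN j]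
      _ = (ninv * nOp e f i 1 1) * (h j - ((pr c.B (c.α i) (c.α j) : ℚ) : ℂ) • h i) := by
          rw [mul_assoc]
      _ = _ := by rw [hn1, one_mul]
  refine ⟨part1, ?_⟩
  -- unit facts
  have h1e : (1 + e i) * (1 - e i) = 1 := by
    have : (1 + e i) * (1 - e i) = 1 - e i * e i := by noncomm_ring
    rw [this, hee, sub_zero]
  have h2e : (1 - e i) * (1 + e i) = 1 := by
    have : (1 - e i) * (1 + e i) = 1 - e i * e i := by noncomm_ring
    rw [this, hee, sub_zero]
  have h1f : (1 + f i) * (1 - f i) = 1 := by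
    have : (1 + f i) * (1 - f i) = 1 - f i * f i := by noncomm_ring
    rw [this, hff, sub_zero]
  have h2f : (1 - f i) * (1 + f i) = 1 := by
    have : (1 - f i) * (1 + f i) = 1 - f i * f i := by noncomm_ring
    rw [this, hff, sub_zero]
  have hNN' : nOp e f i 1 1 * ((1 - e i) * (1 + f i) * (1 - e i)) = 1 := by
    rw [hNsimp]
    calc (1 + e i) * (1 - f i) * (1 + e i) * ((1 - e i) * (1 + f i) * (1 - e i))
        = (1 + e i) * ((1 - f i) * (((1 + e i) * (1 - e i)) * ((1 + f i) * (1 - e i)))) := by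
          noncomm_ring
      _ = (1 + e i) * ((1 - f i) * ((1 + f i) * (1 - e i))) := by rw [h1e, one_mul]
      _ = (1 + e i) * (((1 - f i) * (1 + f i)) * (1 - e i)) := by rw [mul_assoc]
      _ = (1 + e i) * (1 - e i) := by rw [h2f, one_mul]
      _ = 1 := h1e
  have hninv : ninv = (1 - e i) * (1 + f i) * (1 - e i) := by
    calc ninv = ninv * (nOp e f i 1 1 * ((1 - e i) * (1 + f i) * (1 - e i))) := by
          rw [hNN', mul_one]
      _ = (ninv * nOp e f i 1 1) * ((1 - e i) * (1 + f i) * (1 - e i)) :=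
          (mul_assoc ninv (nOp e f i 1 1) _).symm
      _ = _ := by rw [hn1, one_mul]
  -- generators in genLie
  have heL : e i ∈ genLie e f := LieSubalgebra.subset_lieSpan (Or.inl ⟨i, rfl⟩)
  have hfL : f i ∈ genLie e f := LieSubalgebra.subset_lieSpan (Or.inr ⟨i, rfl⟩)
  have hmeL : -e i ∈ genLie e f := (genLie e f).neg_mem heL
  have hmfL : -f i ∈ genLie e f := (genLie e f).neg_mem hfL
  have hmee : (-e i) * (-e i) = 0 := by rw [neg_mul_neg, hee]
  have hmff : (-f i) * (-f i) = 0 := by rw [neg_mul_neg, hff]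
  -- conjugation preserves genLie
  have hgenN : ∀ x ∈ genLie e f, nOp e f i 1 1 * x * ninv ∈ genLie e f := by
    intro x hx
    rw [hNsimp, hninv]
    have step1 : (1 + e i) * x * (1 - e i) ∈ genLie e f := conj_one e f _ x hee heL hx
    have step2 : (1 - f i) * ((1 + e i) * x * (1 - e i)) * (1 + f i) ∈ genLie e f := by
      have := conj_one e f (-f i) _ hmff hmfL step1
      rwa [← sub_eq_add_neg, sub_neg_eq_add] at this
    have step3 := conj_one e f (e i) _ hee heL step2
    have heq : (1 + e i) * (1 - f i) * (1 + e i) * x * ((1 - e i) * (1 + f i) * (1 - e i))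
        = (1 + e i) * ((1 - f i) * ((1 + e i) * x * (1 - e i)) * (1 + f i)) * (1 - e i) := by
      noncomm_ring
    rw [heq]
    exact step3
  have hgenN' : ∀ x ∈ genLie e f, ninv * x * nOp e f i 1 1 ∈ genLie e f := by
    intro x hx
    rw [hNsimp, hninv]
    have step1 : (1 - e i) * x * (1 + e i) ∈ genLie e f := by
      have := conj_one e f (-e i) x hmee hmeL hx
      rwa [← sub_eq_add_neg, sub_neg_eq_add] at this
    have step2 : (1 + f i) * ((1 - e i) * x * (1 + e i)) * (1 - f i) ∈ genLie e f :=
      conj_one e f (f i) _ hff hfL step1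
    have step3 : (1 - e i) * ((1 + f i) * ((1 - e i) * x * (1 + e i)) * (1 - f i)) * (1 + e i)
        ∈ genLie e f := by
      have := conj_one e f (-e i) _ hmee hmeL step2
      rwa [← sub_eq_add_neg, sub_neg_eq_add] at this
    have heq : (1 - e i) * (1 + f i) * (1 - e i) * x * ((1 + e i) * (1 - f i) * (1 + e i))
        = (1 - e i) * ((1 + f i) * ((1 - e i) * x * (1 + e i)) * (1 - f i)) * (1 + e i) := by
      noncomm_ring
    rw [heq]
    exact step3
  -- the reverse commutation relation
  have hiN : h i * nOp e f i 1 1 = -(nOp e f i 1 1 * h i) := by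
    have := hN i
    rw [hprii] at this
    rw [this, show h i - ((2 : ℚ) : ℂ) • h i = -h i by push_cast; module, mul_neg]
  have hNE : ∀ j, (h j - ((pr c.B (c.α i) (c.α j) : ℚ) : ℂ) • h i) * nOp e f i 1 1
      = nOp e f i 1 1 * h j := by
    intro j
    rw [sub_mul, smul_mul_assoc, hN j, hiN, mul_sub, mul_smul_comm]
    rw [smul_neg, sub_neg_eq_add, sub_add_cancel]
  have hcomm' : ∀ j, h j * ninv
      = ninv * (h j - ((pr c.B (c.α i) (c.α j) : ℚ) : ℂ) • h i) := by
    intro j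
    calc h j * ninv = (ninv * nOp e f i 1 1) * h j * ninv := by rw [hn1, one_mul]
      _ = ninv * (nOp e f i 1 1 * h j) * ninv := by rw [mul_assoc ninv]
      _ = ninv * ((h j - ((pr c.B (c.α i) (c.α j) : ℚ) : ℂ) • h i) * nOp e f i 1 1) * ninv := by
          rw [hNE j]
      _ = ninv * (h j - ((pr c.B (c.α i) (c.α j) : ℚ) : ℂ) • h i)
            * (nOp e f i 1 1 * ninv) := by simp only [mul_assoc]
      _ = _ := by rw [hn2, mul_one]
  -- conjugation sends rootSet b to rootSet (s i b)
  have hconj : ∀ A B : Module.End ℂ M, A * B = 1 → B * A = 1 →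
      (∀ j, h j * A = A * (h j - ((pr c.B (c.α i) (c.α j) : ℚ) : ℂ) • h i)) →
      (∀ x ∈ genLie e f, A * x * B ∈ genLie e f) →
      ∀ b : E, ∀ x ∈ rootSet c e f h b, A * x * B ∈ rootSet c e f h (c.s i b) := by
    intro A B hAB hBA hcm hg b x hx
    refine ⟨hg x hx.1, fun j => ?_⟩
    have hBcm : B * h j = (h j - ((pr c.B (c.α i) (c.α j) : ℚ) : ℂ) • h i) * B := by
      calc B * h j = B * (h j * (A * B)) := by rw [hAB, mul_one]
        _ = B * ((h j * A) * B) := by rw [mul_assoc]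
        _ = B * ((A * (h j - ((pr c.B (c.α i) (c.α j) : ℚ) : ℂ) • h i)) * B) := by
            rw [hcm j]
        _ = (B * A) * ((h j - ((pr c.B (c.α i) (c.α j) : ℚ) : ℂ) • h i) * B) := by
            simp only [mul_assoc]
        _ = _ := by rw [hBA, one_mul]
    have expand : ⁅h j, A * x * B⁆
        = A * ⁅h j - ((pr c.B (c.α i) (c.α j) : ℚ) : ℂ) • h i, x⁆ * B := by
      calc ⁅h j, A * x * B⁆ = (h j * A) * (x * B) - (A * x) * (B * h j) := by
            rw [Ring.lie_def]; noncomm_ring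
        _ = (A * (h j - ((pr c.B (c.α i) (c.α j) : ℚ) : ℂ) • h i)) * (x * B)
            - (A * x) * ((h j - ((pr c.B (c.α i) (c.α j) : ℚ) : ℂ) • h i) * B) := by
            rw [hcm j, hBcm]
        _ = A * ((h j - ((pr c.B (c.α i) (c.α j) : ℚ) : ℂ) • h i) * x
            - x * (h j - ((pr c.B (c.α i) (c.α j) : ℚ) : ℂ) • h i)) * B := by
            noncomm_ring
        _ = _ := by rw [Ring.lie_def]
    rw [expand]
    have hbr : ⁅h j - ((pr c.B (c.α i) (c.α j) : ℚ) : ℂ) • h i, x⁆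
        = ((pr c.B (c.s i b) (c.α j) : ℚ) : ℂ) • x := by
      rw [sub_lie, smul_lie, hx.2 j, hx.2 i, smul_smul, ← sub_smul]
      congr 1
      rw [c.pr_s i j b]
      push_cast
      ring
    rw [hbr, mul_smul_comm, smul_mul_assoc]
  -- part 2
  intro a _
  ext y
  constructor
  · rintro ⟨x, hx, rfl⟩
    exact hconj (nOp e f i 1 1) ninv hn2 hn1 hN hgenN a x hx
  · intro hy
    refine ⟨ninv * y * nOp e f i 1 1, ?_, ?_⟩
    · have hmem := hconj ninv (nOp e f i 1 1) hn1 hn2 hcomm' hgenN' (c.s i a) y hy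
      have hii : c.s i (c.s i a) = a :=
        Module.involutive_reflection (c.coform_self (c.α_mem i)) a
      rwa [hii] at hmem
    · show nOp e f i 1 1 * (ninv * y * nOp e f i 1 1) * ninv = y
      calc nOp e f i 1 1 * (ninv * y * nOp e f i 1 1) * ninv
          = (nOp e f i 1 1 * ninv) * y * (nOp e f i 1 1 * ninv) := by noncomm_ring
        _ = y := by rw [hn2, one_mul, mul_one]
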